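/- Let m ≥ 5 be an integer with gcd(m,3) = 1 and let l be an integer. Then |sin(lπ/m)| ≠ √3/2, and if |sin(lπ/m)| ≤ √3/2 then |sin(lπ/m)| ≤ sin((π/m)·⌊m/3⌋). -/

import Mathlib

open Finset Filter Topology

noncomputable section

/-- `s n` is the number of 1's in the binary expansion of `n`. -/
def s (n : ℕ) : ℕ := (Nat.digits 2 n).count 1

/-- `S m x = ∑_{0 ≤ n < x, m ∣ n} (-1)^(s n)`. -/
def S (m x : ℕ) : ℝ := ∑ n ∈ Finset.range x, if m ∣ n then (-1 : ℝ) ^ (s n) else 0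

/-- `F α N = ∑_{n=0}^{N-1} e^{2πi(αn + s(n)/2)}`. -/
def F (α : ℝ) (N : ℕ) : ℂ :=
  ∑ n ∈ Finset.range N, Complex.exp (2 * Real.pi * Complex.I * ((α : ℂ) * n + (s n : ℂ) / 2))

/-- `bsq m = b_m ^ 2`, defined by cases on `m mod 3`. -/
def bsq (m : ℕ) : ℝ :=
  if m % 3 = 0 then
    Real.sin (Real.pi / 3 * (1 + 3 / m)) * (Real.sqrt 3 - Real.sin (Real.pi / 3 * (1 + 3 / m)))
  else if m % 3 = 1 then
    Real.sin (Real.pi / 3 * (1 - 1 / m)) * (Real.sqrt 3 - Real.sin (Real.pi / 3 * (1 - 1 / m)))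
  else
    Real.sin (Real.pi / 3 * (1 + 1 / m)) * (Real.sqrt 3 - Real.sin (Real.pi / 3 * (1 + 1 / m)))

/-- `b m` is the positive real number with `(b m)^2 = bsq m`. -/
def b (m : ℕ) : ℝ := Real.sqrt (bsq m)

/-- `lam m = λ_m = 1 + log₂ b_m`. -/
def lam (m : ℕ) : ℝ := 1 + Real.logb 2 (b m)

/-- `mu m = μ_m = (2 b_m + 1)/(2 b_m - 1)`. -/
def mu (m : ℕ) : ℝ := (2 * b m + 1) / (2 * b m - 1)

/-- `U m x`: positive integers `≤ x` divisible by `m` and not by 3. -/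
def U (m x : ℕ) : Finset ℕ := (Finset.Icc 1 x).filter (fun n => m ∣ n ∧ ¬ (3 ∣ n))

/-- `V p n`: positive integers `≤ n` whose least prime divisor is `p`. -/
def V (p n : ℕ) : Finset ℕ := (Finset.Icc 1 n).filter (fun j => Nat.minFac j = p)

theorem stmt_9 (m : ℕ) (hm : 5 ≤ m) (hgcd : Nat.gcd m 3 = 1) (l : ℤ) :
    |Real.sin ((l : ℝ) * Real.pi / m)| ≠ Real.sqrt 3 / 2 ∧
      (|Real.sin ((l : ℝ) * Real.pi / m)| ≤ Real.sqrt 3 / 2 →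
        |Real.sin ((l : ℝ) * Real.pi / m)| ≤ Real.sin (Real.pi / m * (⌊(m : ℝ) / 3⌋ : ℤ))) := by
  have hpi := Real.pi_pos
  have hmR : (0:ℝ) < m := by exact_mod_cast (by omega : 0 < m)
  have hmZ : (0:ℤ) < m := by exact_mod_cast (by omega : 0 < m)
  have hm3 : m % 3 ≠ 0 := by
    intro h
    have h3 : (3:ℕ) ∣ m := Nat.dvd_of_mod_eq_zero h
    have : (3:ℕ) ∣ 1 := hgcd ▸ Nat.dvd_gcd h3 dvd_rfl
    omega
  -- reduce to a ∈ [0, m)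
  set a : ℕ := (l % (m:ℤ)).toNat with ha
  have hal : ((l % m : ℤ) : ℝ) = (a : ℝ) := by
    rw [ha]; norm_cast
    exact (Int.toNat_of_nonneg (Int.emod_nonneg l (by omega))).symm
  have ham : a < m := by
    have := Int.emod_lt_of_pos l hmZ
    omega
  have habs : |Real.sin ((l : ℝ) * Real.pi / m)| = |Real.sin ((a : ℝ) * Real.pi / m)| := by
    have hl : (l : ℝ) * Real.pi / m = (a : ℝ) * Real.pi / m + (l / m : ℤ) * Real.pi := by
      have hlz : (l : ℝ) = (m : ℝ) * ((l / m : ℤ) : ℝ) + (a : ℝ) := by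
        rw [← hal]
        exact_mod_cast congrArg (fun z : ℤ => (z : ℝ)) (Int.mul_ediv_add_emod l m).symm
      rw [hlz]; field_simp; ring
    rw [hl, Real.sin_add_int_mul_pi, abs_mul]
    have h1 : |((-1:ℝ)) ^ (l / (m:ℤ))| = 1 := by
      rcases Int.even_or_odd (l / (m:ℤ)) with he | ho
      · rw [he.neg_one_zpow, abs_one]
      · rw [ho.neg_one_zpow, abs_neg, abs_one]
    rw [h1, one_mul]
  set r : ℕ := min a (m - a) with hr
  have h2r : 2 * r ≤ m := by omega
  have hra : |Real.sin ((a : ℝ) * Real.pi / m)| = Real.sin ((r : ℝ) * Real.pi / m) := by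
    have hnn : 0 ≤ Real.sin ((a : ℝ) * Real.pi / m) := by
      apply Real.sin_nonneg_of_nonneg_of_le_pi
      · positivity
      · rw [div_le_iff₀ hmR]
        have : (a:ℝ) ≤ m := by exact_mod_cast ham.le
        nlinarith
    rw [abs_of_nonneg hnn]
    rcases le_or_gt a (m - a) with h | h
    · have : r = a := by omega
      rw [this]
    · have hrma : r = m - a := by omega
      have : ((r : ℝ)) = (m : ℝ) - a := by rw [hrma]; push_cast [Nat.cast_sub ham.le]; ring
      rw [this]
      have : ((m:ℝ) - a) * Real.pi / m = Real.pi - (a:ℝ) * Real.pi / m := by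
        field_simp
      rw [this, Real.sin_pi_sub]
  rw [habs, hra]
  have hmem : (r : ℝ) * Real.pi / m ∈ Set.Icc (-(Real.pi/2)) (Real.pi/2) := by
    constructor
    · have : (0:ℝ) ≤ (r : ℝ) * Real.pi / m := by positivity
      linarith
    · rw [div_le_iff₀ hmR]
      have : (2:ℝ) * r ≤ m := by exact_mod_cast h2r
      nlinarith
  have hmem3 : Real.pi / 3 ∈ Set.Icc (-(Real.pi/2)) (Real.pi/2) := by
    constructor <;> nlinarith
  constructor
  · intro h
    rw [← Real.sin_pi_div_three] at h
    have := Real.injOn_sin hmem hmem3 h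
    have h3r : 3 * r = m := by
      have : (3:ℝ) * r = m := by
        field_simp at this
        nlinarith
      exact_mod_cast this
    omega
  · intro h
    rw [← Real.sin_pi_div_three] at h
    have hrle : (r : ℝ) * Real.pi / m ≤ Real.pi / 3 := by
      by_contra hc
      push_neg at hc
      have := Real.strictMonoOn_sin hmem3 hmem hc
      linarith
    have hr3 : r ≤ m / 3 := by
      have h3rm : 3 * r ≤ m := by
        have : (3:ℝ) * r ≤ m := by
          rw [div_le_div_iff₀ hmR (by norm_num : (0:ℝ) < 3)] at hrle
          nlinarith
        exact_mod_cast this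
      omega
    have hfloor : (⌊(m : ℝ) / 3⌋ : ℤ) = ((m / 3 : ℕ) : ℤ) := by
      rw [Int.floor_eq_iff]
      have h1 : 3 * (m / 3) ≤ m := by omega
      have h2 : m < 3 * (m / 3) + 3 := by omega
      have h1R : 3 * ((m / 3 : ℕ) : ℝ) ≤ m := by exact_mod_cast h1
      have h2R : (m : ℝ) < 3 * ((m / 3 : ℕ) : ℝ) + 3 := by exact_mod_cast h2
      have hc : ((((m / 3 : ℕ) : ℤ)) : ℝ) = ((m / 3 : ℕ) : ℝ) := by norm_cast
      rw [hc]
      constructor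
      · linarith
      · linarith
    rw [hfloor]
    push_cast
    have hq3 : 3 * (m / 3) ≤ m := by omega
    have hqR : (3:ℝ) * (m / 3 : ℕ) ≤ m := by exact_mod_cast hq3
    have hmemq : Real.pi / m * ((m / 3 : ℕ) : ℝ) ∈ Set.Icc (-(Real.pi/2)) (Real.pi/2) := by
      constructor
      · have : (0:ℝ) ≤ Real.pi / m * ((m / 3 : ℕ) : ℝ) := by positivity
        linarith
      · rw [div_mul_eq_mul_div, div_le_iff₀ hmR]
        nlinarith
    have hle : (r : ℝ) * Real.pi / m ≤ Real.pi / m * ((m / 3 : ℕ) : ℝ) := by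
      rw [div_mul_eq_mul_div, div_le_div_iff₀ hmR hmR]
      have : (r:ℝ) ≤ ((m/3 : ℕ):ℝ) := by exact_mod_cast hr3
      nlinarith [mul_le_mul_of_nonneg_right (mul_le_mul_of_nonneg_left this hpi.le) hmR.le]
    exact Real.strictMonoOn_sin.monotoneOn hmem hmemq hle
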